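/- arXiv:1909.10687 — 2 statements merged into one kernel-verified Lean document; each statement's English description precedes it below -/
import Mathlib

section
/- For a bounded open set D ⊂ ℝ^d and a symmetric kernel k(x,y) = j(|x−y|) with j : (0,∞) → (0,∞) non-increasing, there exists a constant c > 0 such that for every u ∈ L²(ℝ^d) with u = 0 a.e. on D^c, one has ∫_D u(x)² dx ≤ c⁻¹ · Ê(u,u), where Ê(u,u) = (1/2)∬_{(ℝ^d×ℝ^d)∖(D^c×D^c)} (u(x)−u(y))² k(x,y) dy dx. In particular c can be taken as inf over x ∈ D of ∫_{B(x, diam D)^c} j(|x−y|) dy, which is positive. -/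
open MeasureTheory Set
open scoped ENNReal

noncomputable section

/-- Euclidean space `ℝ^d`. -/
abbrev Euc (d : ℕ) := EuclideanSpace ℝ (Fin d)

/-- Poincaré-type inequality: there is a constant `c > 0` (which can be taken
as `inf_{x ∈ D} ∫_{B(x, diam D)ᶜ} j(|x-y|) dy`) such that for every `u ∈ L²(ℝ^d)` vanishing
a.e. on `Dᶜ` one has `∫_D u² ≤ c⁻¹ · Ê(u,u)`. -/
theorem statement0 (d : ℕ) (hd : 2 ≤ d)
    (D : Set (Euc d)) (hDopen : IsOpen D) (hDbdd : Bornology.IsBounded D)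
    (j : ℝ → ℝ) (hjpos : ∀ r : ℝ, 0 < r → 0 < j r)
    (hjmono : ∀ r s : ℝ, 0 < r → r ≤ s → j s ≤ j r)
    (hjmeas : Measurable j)
    (hjint : ∫⁻ z : Euc d, ENNReal.ofReal ((min 1 (‖z‖ ^ 2)) * j ‖z‖) < ⊤) :
    ∃ c : ℝ, 0 < c ∧
      (∀ x ∈ D,
        ENNReal.ofReal c ≤ ∫⁻ y in (Metric.ball x (Metric.diam D))ᶜ,
          ENNReal.ofReal (j (dist x y))) ∧
      ∀ u : Euc d → ℝ, Measurable u → MemLp u 2 (volume : Measure (Euc d)) →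
        (∀ᵐ x ∂(volume : Measure (Euc d)), x ∈ Dᶜ → u x = 0) →
        ∫⁻ x in D, ENNReal.ofReal (u x ^ 2) ≤
          ENNReal.ofReal c⁻¹ *
            ((1 / 2 : ℝ≥0∞) * ∫⁻ p in ((univ : Set (Euc d × Euc d)) \ (Dᶜ ×ˢ Dᶜ)),
              ENNReal.ofReal ((u p.1 - u p.2) ^ 2 * j (dist p.1 p.2))) := by
  classical
  rcases Set.eq_empty_or_nonempty D with hDe | ⟨x₀, hx₀⟩
  · refine ⟨1, one_pos, ?_, ?_⟩
    · intro x hx; rw [hDe] at hx; exact absurd hx (Set.notMem_empty x)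
    · intro u _ _ _
      rw [hDe]
      simp
  -- `D` is nonempty
  set R := Metric.diam D with hRdef
  have i0 : Fin d := ⟨0, by omega⟩
  haveI hnt : Nontrivial (Euc d) := by
    refine ⟨EuclideanSpace.single i0 (1 : ℝ), 0, fun h => ?_⟩
    have := congrArg norm h
    rw [EuclideanSpace.norm_single, norm_one, norm_zero] at this
    exact one_ne_zero this
  -- `R > 0`
  have hR : 0 < R := by
    rcases lt_or_eq_of_le (Metric.diam_nonneg (s := D)) with h | h
    · exact h
    · exfalso
      have hsub : D ⊆ {x₀} := by
        intro y hy
        have := Metric.dist_le_diam_of_mem hDbdd hy hx₀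
        rw [← h] at this
        have : dist y x₀ = 0 := le_antisymm this dist_nonneg
        simpa [Set.mem_singleton_iff] using dist_eq_zero.mp this
      have hpos : 0 < volume D := hDopen.measure_pos volume ⟨x₀, hx₀⟩
      have : volume D ≤ volume ({x₀} : Set (Euc d)) := measure_mono hsub
      rw [measure_singleton] at this
      exact hpos.ne' (le_antisymm this zero_le)
  -- the annulus
  set A : Set (Euc d) := Metric.closedBall (0 : Euc d) (R + 1) \ Metric.ball (0 : Euc d) R
    with hAdef
  have hAm : volume A = volume (Metric.closedBall (0 : Euc d) (R + 1))
      - volume (Metric.ball (0 : Euc d) R) := by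
    apply measure_diff
    · exact Metric.ball_subset_closedBall.trans
        (Metric.closedBall_subset_closedBall (by linarith))
    · exact measurableSet_ball.nullMeasurableSet
    · exact (measure_ball_lt_top).ne
  -- positivity of the annulus volume
  have hApos : 0 < volume A := by
    set p : Euc d := (R + 1/2) • (EuclideanSpace.single i0 (1 : ℝ)) with hp
    have hnp : ‖p‖ = R + 1/2 := by
      rw [hp, norm_smul, EuclideanSpace.norm_single, norm_one, mul_one, Real.norm_eq_abs,
        abs_of_pos (by linarith)]
    have hsub : Metric.ball p (1/2) ⊆ A := by
      intro y hy
      rw [Metric.mem_ball] at hy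
      constructor
      · rw [Metric.mem_closedBall]
        calc dist y 0 ≤ dist y p + dist p 0 := dist_triangle y p 0
          _ ≤ 1/2 + (R + 1/2) := add_le_add hy.le (by rw [dist_zero_right, hnp])
          _ = R + 1 := by ring
      · intro hy'
        rw [Metric.mem_ball] at hy'
        have h1 : dist p 0 ≤ dist p y + dist y 0 := dist_triangle p y 0
        rw [dist_zero_right, hnp] at h1
        have h2 : dist p y < 1/2 := by rw [dist_comm]; exact hy
        linarith
    calc (0 : ℝ≥0∞) < volume (Metric.ball p (1/2)) :=
          Metric.measure_ball_pos volume p (by norm_num)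
      _ ≤ volume A := measure_mono hsub
  have hAtop : volume A < ⊤ :=
    lt_of_le_of_lt (measure_mono Set.diff_subset) measure_closedBall_lt_top
  -- the constant
  set c : ℝ := j (R + 1) * (volume A).toReal with hc
  have hjR : 0 < j (R + 1) := hjpos _ (by linarith)
  have hcpos : 0 < c := mul_pos hjR (ENNReal.toReal_pos hApos.ne' hAtop.ne)
  have hofc : ENNReal.ofReal c = ENNReal.ofReal (j (R + 1)) * volume A := by
    rw [hc, ENNReal.ofReal_mul hjR.le, ENNReal.ofReal_toReal hAtop.ne]
  -- the lower bound for the integral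
  have hlow : ∀ x ∈ D, ENNReal.ofReal c ≤ ∫⁻ y in (Metric.ball x R)ᶜ,
      ENNReal.ofReal (j (dist x y)) := by
    intro x hx
    set Ax : Set (Euc d) := Metric.closedBall x (R + 1) \ Metric.ball x R with hAx
    have hAxm : volume Ax = volume A := by
      rw [hAx, hAdef]
      rw [measure_diff (Metric.ball_subset_closedBall.trans
          (Metric.closedBall_subset_closedBall (by linarith)))
        measurableSet_ball.nullMeasurableSet measure_ball_lt_top.ne, hAm,
        Measure.addHaar_closedBall_center, Measure.addHaar_ball_center]
    have hsub : Ax ⊆ (Metric.ball x R)ᶜ := fun y hy => hy.2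
    calc ENNReal.ofReal c = ENNReal.ofReal (j (R + 1)) * volume Ax := by
          rw [hofc, hAxm]
      _ = ∫⁻ _ in Ax, ENNReal.ofReal (j (R + 1)) := (setLIntegral_const _ _).symm
      _ ≤ ∫⁻ y in Ax, ENNReal.ofReal (j (dist x y)) := by
          apply setLIntegral_mono
            (ENNReal.measurable_ofReal.comp (hjmeas.comp (measurable_const.dist measurable_id)))
          intro y hy
          apply ENNReal.ofReal_le_ofReal
          have hd1 : 0 < dist x y := by
            rw [dist_comm]
            calc (0:ℝ) < R := hR
              _ ≤ dist y x := le_of_not_gt fun hlt => hy.2 (Metric.mem_ball.mpr hlt)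
          have hd2 : dist x y ≤ R + 1 := by
            rw [dist_comm]
            exact Metric.mem_closedBall.mp hy.1
          exact hjmono _ _ hd1 hd2
      _ ≤ ∫⁻ y in (Metric.ball x R)ᶜ, ENNReal.ofReal (j (dist x y)) :=
          lintegral_mono_set hsub
  refine ⟨c, hcpos, hlow, ?_⟩
  intro u hu _ hu0
  set f : Euc d × Euc d → ℝ≥0∞ :=
    fun p => ENNReal.ofReal ((u p.1 - u p.2) ^ 2 * j (dist p.1 p.2)) with hf
  have hfm : Measurable f := by
    apply ENNReal.measurable_ofReal.comp
    exact (((hu.comp measurable_fst).sub (hu.comp measurable_snd)).pow_const 2).mul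
      (hjmeas.comp measurable_dist)
  have hfsymm : ∀ a b : Euc d, f (a, b) = f (b, a) := by
    intro a b
    simp only [hf]
    rw [dist_comm]
    ring_nf
  have hDm : MeasurableSet D := hDopen.measurableSet
  -- key pointwise estimate
  have key : ∀ x ∈ D, ENNReal.ofReal c * ENNReal.ofReal (u x ^ 2)
      ≤ ∫⁻ y in Dᶜ, f (x, y) := by
    intro x hx
    have hsub : (Metric.ball x R)ᶜ ⊆ Dᶜ ∪ Metric.sphere x R := by
      intro y hy
      by_cases hyD : y ∈ D
      · right
        have h1 : dist y x ≤ R := Metric.dist_le_diam_of_mem hDbdd hyD hx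
        have h2 : ¬ dist y x < R := fun h => hy (Metric.mem_ball.mpr h)
        exact Metric.mem_sphere.mpr (le_antisymm h1 (not_lt.mp h2))
      · exact Or.inl hyD
    calc ENNReal.ofReal c * ENNReal.ofReal (u x ^ 2)
        ≤ (∫⁻ y in (Metric.ball x R)ᶜ, ENNReal.ofReal (j (dist x y)))
            * ENNReal.ofReal (u x ^ 2) := mul_le_mul_left (hlow x hx) _
      _ = ∫⁻ y in (Metric.ball x R)ᶜ, ENNReal.ofReal (j (dist x y))
            * ENNReal.ofReal (u x ^ 2) :=
          (lintegral_mul_const' _ _ ENNReal.ofReal_ne_top).symm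
      _ = ∫⁻ y in (Metric.ball x R)ᶜ, ENNReal.ofReal (u x ^ 2 * j (dist x y)) := by
          apply lintegral_congr
          intro y
          rw [ENNReal.ofReal_mul (sq_nonneg _), mul_comm]
      _ ≤ ∫⁻ y in Dᶜ ∪ Metric.sphere x R, ENNReal.ofReal (u x ^ 2 * j (dist x y)) :=
          lintegral_mono_set hsub
      _ ≤ (∫⁻ y in Dᶜ, ENNReal.ofReal (u x ^ 2 * j (dist x y)))
            + ∫⁻ y in Metric.sphere x R, ENNReal.ofReal (u x ^ 2 * j (dist x y)) :=
          lintegral_union_le _ _ _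
      _ = ∫⁻ y in Dᶜ, ENNReal.ofReal (u x ^ 2 * j (dist x y)) := by
          rw [setLIntegral_measure_zero _ _ (Measure.addHaar_sphere volume x R), add_zero]
      _ = ∫⁻ y in Dᶜ, f (x, y) := by
          apply lintegral_congr_ae
          filter_upwards [ae_restrict_of_ae hu0, ae_restrict_mem hDm.compl] with y h1 h2
          rw [hf]
          simp only
          rw [h1 h2, sub_zero]
  -- Tonelli for the two product sets
  have tonelli1 : ∫⁻ p in D ×ˢ Dᶜ, f p = ∫⁻ x in D, ∫⁻ y in Dᶜ, f (x, y) := by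
    rw [Measure.volume_eq_prod, ← Measure.prod_restrict]
    exact lintegral_prod f hfm.aemeasurable
  have tonelli2 : ∫⁻ p in D ×ˢ Dᶜ, f p = ∫⁻ y in Dᶜ, ∫⁻ x in D, f (x, y) := by
    rw [Measure.volume_eq_prod, ← Measure.prod_restrict]
    exact lintegral_prod_symm f hfm.aemeasurable
  have tonelli3 : ∫⁻ p in Dᶜ ×ˢ D, f p = ∫⁻ x in Dᶜ, ∫⁻ y in D, f (x, y) := by
    rw [Measure.volume_eq_prod, ← Measure.prod_restrict]
    exact lintegral_prod f hfm.aemeasurable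
  have swap_eq : ∫⁻ p in Dᶜ ×ˢ D, f p = ∫⁻ p in D ×ˢ Dᶜ, f p := by
    rw [tonelli3, tonelli2]
    apply lintegral_congr
    intro a
    apply lintegral_congr
    intro b
    exact hfsymm a b
  -- step 1
  have step1 : ENNReal.ofReal c * ∫⁻ x in D, ENNReal.ofReal (u x ^ 2)
      ≤ ∫⁻ p in D ×ˢ Dᶜ, f p := by
    rw [tonelli1, ← lintegral_const_mul' _ _ ENNReal.ofReal_ne_top]
    apply lintegral_mono_ae
    filter_upwards [ae_restrict_mem hDm] with x hx using key x hx
  -- step 2 : the union bound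
  have hdisj : Disjoint (D ×ˢ Dᶜ) (Dᶜ ×ˢ D) := by
    rw [Set.disjoint_left]
    rintro ⟨a, b⟩ ⟨ha, _⟩ ⟨ha', _⟩
    exact ha' ha
  have hsub2 : (D ×ˢ Dᶜ) ∪ (Dᶜ ×ˢ D) ⊆ (univ : Set (Euc d × Euc d)) \ (Dᶜ ×ˢ Dᶜ) := by
    rintro ⟨a, b⟩ (⟨ha, _⟩ | ⟨_, hb⟩)
    · exact ⟨Set.mem_univ _, fun h => h.1 ha⟩
    · exact ⟨Set.mem_univ _, fun h => h.2 hb⟩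
  have union_le : (∫⁻ p in D ×ˢ Dᶜ, f p) + ∫⁻ p in Dᶜ ×ˢ D, f p
      ≤ ∫⁻ p in (univ : Set (Euc d × Euc d)) \ (Dᶜ ×ˢ Dᶜ), f p := by
    rw [← lintegral_union (hDm.compl.prod hDm) hdisj]
    exact lintegral_mono_set hsub2
  -- combine
  set T := ∫⁻ p in D ×ˢ Dᶜ, f p with hT
  set I := ∫⁻ p in (univ : Set (Euc d × Euc d)) \ (Dᶜ ×ˢ Dᶜ), f p with hI
  have hTI : T ≤ (1/2 : ℝ≥0∞) * I := by
    have h2T : T + T ≤ I := by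
      calc T + T = T + ∫⁻ p in Dᶜ ×ˢ D, f p := by rw [swap_eq]
        _ ≤ I := union_le
    calc T = (1/2 : ℝ≥0∞) * (T + T) := by
          rw [← two_mul, ← mul_assoc, one_div,
            ENNReal.inv_mul_cancel two_ne_zero ENNReal.ofNat_ne_top, one_mul]
      _ ≤ (1/2 : ℝ≥0∞) * I := mul_le_mul_right h2T _
  have final : ENNReal.ofReal c * ∫⁻ x in D, ENNReal.ofReal (u x ^ 2)
      ≤ (1/2 : ℝ≥0∞) * I := le_trans step1 hTI
  rw [ENNReal.ofReal_inv_of_pos hcpos]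
  calc ∫⁻ x in D, ENNReal.ofReal (u x ^ 2)
      = (ENNReal.ofReal c)⁻¹ * (ENNReal.ofReal c * ∫⁻ x in D, ENNReal.ofReal (u x ^ 2)) := by
        rw [← mul_assoc, ENNReal.inv_mul_cancel
          (ENNReal.ofReal_pos.mpr hcpos).ne' ENNReal.ofReal_ne_top, one_mul]
    _ ≤ (ENNReal.ofReal c)⁻¹ * ((1/2 : ℝ≥0∞) * I) := mul_le_mul_right final _
end
end

section
/- If u : ℝ^d → ℝ satisfies u ∈ L²(ℝ^d, m(dx)) and Ê(u,u) < ∞ (i.e. u ∈ ℱ), then both u·1_{D^c} and u·1_D also belong to ℱ; moreover Ê(u 1_{D^c}, u 1_{D^c}) = ∫_{D^c} u(x)² μ(x) dx. -/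
open MeasureTheory Set
open scoped ENNReal

noncomputable section

/-- `μ(x) = ∫_D k(x,y) dy` as an `ℝ≥0∞`-valued density. -/
def muDens (d : ℕ) (D : Set (Euc d)) (k : Euc d → Euc d → ℝ) (x : Euc d) : ℝ≥0∞ :=
  ∫⁻ y in D, ENNReal.ofReal (k x y)

/-- The measure `m(dx) = 1_D(x) dx + 1_{Dᶜ}(x) μ(x) dx`. -/
def mMeas (d : ℕ) (D : Set (Euc d)) (k : Euc d → Euc d → ℝ) : Measure (Euc d) :=
  volume.restrict D + (volume.restrict Dᶜ).withDensity (muDens d D k)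

/-- The energy `Ê(u,u) = (1/2)∬_{(ℝ^d×ℝ^d)∖(Dᶜ×Dᶜ)} (u(x)-u(y))² k(x,y) dy dx`. -/
def hatE (d : ℕ) (D : Set (Euc d)) (k : Euc d → Euc d → ℝ) (u : Euc d → ℝ) : ℝ≥0∞ :=
  (1 / 2 : ℝ≥0∞) * ∫⁻ p in ((univ : Set (Euc d × Euc d)) \ (Dᶜ ×ˢ Dᶜ)),
    ENNReal.ofReal ((u p.1 - u p.2) ^ 2 * k p.1 p.2)

/-- Membership in `ℱ = {u ∈ L²(ℝ^d, m) : Ê(u,u) < ∞}`. -/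
def memF (d : ℕ) (D : Set (Euc d)) (k : Euc d → Euc d → ℝ) (u : Euc d → ℝ) : Prop :=
  MemLp u 2 (mMeas d D k) ∧ hatE d D k u < ⊤

/-- if `u ∈ ℱ` then `u·1_{Dᶜ}` and `u·1_D` are in `ℱ`, and
`Ê(u 1_{Dᶜ}, u 1_{Dᶜ}) = ∫_{Dᶜ} u(x)² μ(x) dx`. -/
theorem statement3 (d : ℕ)
    (D : Set (Euc d)) (hDopen : IsOpen D) (hDbdd : Bornology.IsBounded D)
    (hbd : volume (frontier D) = 0)
    (j : ℝ → ℝ) (hjpos : ∀ r : ℝ, 0 < r → 0 < j r)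
    (hjmono : ∀ r s : ℝ, 0 < r → r ≤ s → j s ≤ j r) (hjmeas : Measurable j)
    (k : Euc d → Euc d → ℝ) (hk : ∀ x y, k x y = j (dist x y))
    (u : Euc d → ℝ) (humeas : Measurable u) (hu : memF d D k u) :
    memF d D k (Dᶜ.indicator u) ∧ memF d D k (D.indicator u) ∧
      hatE d D k (Dᶜ.indicator u) =
        ∫⁻ x in Dᶜ, ENNReal.ofReal (u x ^ 2) * muDens d D k x := by
  have hA : MeasurableSet D := hDopen.measurableSet
  have hAc : MeasurableSet Dᶜ := hA.compl
  set v : Euc d → ℝ := Dᶜ.indicator u with hv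
  set w : Euc d → ℝ := D.indicator u with hw
  have hvmeas : Measurable v := humeas.indicator hAc
  have hwmeas : Measurable w := humeas.indicator hA
  have hKmeas : Measurable fun p : Euc d × Euc d => k p.1 p.2 := by
    have : (fun p : Euc d × Euc d => k p.1 p.2) = fun p => j (dist p.1 p.2) :=
      funext fun p => hk _ _
    rw [this]
    exact hjmeas.comp (measurable_fst.dist measurable_snd)
  have hKofR : Measurable fun p : Euc d × Euc d => ENNReal.ofReal (k p.1 p.2) :=
    hKmeas.ennreal_ofReal
  have ksymm : ∀ x y : Euc d, k x y = k y x := fun x y => by rw [hk, hk, dist_comm]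
  have hμmeas : Measurable (muDens d D k) := by
    apply Measurable.lintegral_prod_right (f := fun x y => ENNReal.ofReal (k x y))
    exact hKofR
  set T : ℝ≥0∞ := ∫⁻ x in Dᶜ, ENNReal.ofReal (u x ^ 2) * muDens d D k x with hT
  -- Piece 1
  have piece1 : ∫⁻ p in Dᶜ ×ˢ D, ENNReal.ofReal (u p.1 ^ 2 * k p.1 p.2) = T := by
    rw [Measure.volume_eq_prod, ← Measure.prod_restrict]
    rw [lintegral_prod (fun p : Euc d × Euc d => ENNReal.ofReal (u p.1 ^ 2 * k p.1 p.2)) (by fun_prop)]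
    refine lintegral_congr fun x => ?_
    simp_rw [ENNReal.ofReal_mul (sq_nonneg (u x))]
    rw [lintegral_const_mul _ (by fun_prop)]
    rfl
  -- Piece 2
  have piece2 : ∫⁻ p in D ×ˢ Dᶜ, ENNReal.ofReal (u p.2 ^ 2 * k p.1 p.2) = T := by
    rw [Measure.volume_eq_prod, ← Measure.prod_restrict]
    have hswap := (Measure.measurePreserving_swap (μ := volume.restrict Dᶜ) (ν := volume.restrict D)).lintegral_comp
      (f := fun p : Euc d × Euc d => ENNReal.ofReal (u p.2 ^ 2 * k p.1 p.2))
      (by fun_prop)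
    rw [← hswap]
    simp only [Prod.swap]
    have : ∀ p : Euc d × Euc d, k p.2 p.1 = k p.1 p.2 := fun p => ksymm _ _
    simp_rw [this]
    rw [← piece1, Measure.volume_eq_prod, ← Measure.prod_restrict]
  -- main equality
  have hsplit : ((univ : Set (Euc d × Euc d)) \ (Dᶜ ×ˢ Dᶜ)) =
      ((D ×ˢ D) ∪ (D ×ˢ Dᶜ)) ∪ (Dᶜ ×ˢ D) := by
    ext p; by_cases h1 : p.1 ∈ D <;> simp [Set.mem_prod, h1] <;> tauto
  have hEv : hatE d D k v = T := by
    have hd1 : Disjoint (D ×ˢ D) (D ×ˢ Dᶜ) := by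
      rw [Set.disjoint_left]; rintro p ⟨_, h2⟩ ⟨_, h2'⟩; exact h2' h2
    have hd2 : Disjoint ((D ×ˢ D) ∪ (D ×ˢ Dᶜ)) (Dᶜ ×ˢ D) := by
      rw [Set.disjoint_left]; rintro p hp ⟨h1', _⟩
      rcases hp with ⟨h1, _⟩ | ⟨h1, _⟩ <;> exact h1' h1
    rw [hatE, hsplit, lintegral_union (hAc.prod hA) hd2, lintegral_union (hA.prod hAc) hd1]
    have e1 : ∫⁻ p in D ×ˢ D,
        ENNReal.ofReal ((v p.1 - v p.2) ^ 2 * k p.1 p.2) = 0 := by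
      rw [setLIntegral_congr_fun (hA.prod hA) ?_, lintegral_zero]
      rintro p ⟨h1, h2⟩
      simp [hv, Set.indicator_of_notMem ((fun hc => hc h1 : _ ∉ Dᶜ)), Set.indicator_of_notMem ((fun hc => hc h2 : _ ∉ Dᶜ))]
    have e2 : ∫⁻ p in D ×ˢ Dᶜ,
        ENNReal.ofReal ((v p.1 - v p.2) ^ 2 * k p.1 p.2) = T := by
      rw [← piece2]
      refine setLIntegral_congr_fun (hA.prod hAc) ?_
      rintro p ⟨h1, h2⟩
      simp [hv, Set.indicator_of_notMem ((fun hc => hc h1 : _ ∉ Dᶜ)), Set.indicator_of_mem h2]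
    have e3 : ∫⁻ p in Dᶜ ×ˢ D,
        ENNReal.ofReal ((v p.1 - v p.2) ^ 2 * k p.1 p.2) = T := by
      rw [← piece1]
      refine setLIntegral_congr_fun (hAc.prod hA) ?_
      rintro p ⟨h1, h2⟩
      simp [hv, Set.indicator_of_mem h1, Set.indicator_of_notMem ((fun hc => hc h2 : _ ∉ Dᶜ))]
    rw [e1, e2, e3, zero_add, ← two_mul, ← mul_assoc]
    rw [one_div, ENNReal.inv_mul_cancel (by norm_num) (by norm_num), one_mul]
  -- finiteness of T
  have hTfin : T < ⊤ := by
    have h2 := lintegral_rpow_enorm_lt_top_of_eLpNorm_lt_top (f := u)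
      (p := 2) (μ := mMeas d D k) (by norm_num) (by norm_num) hu.1.2
    rw [mMeas, lintegral_add_measure] at h2
    have h3 : (∫⁻ x, ‖u x‖ₑ ^ (2 : ℝ≥0∞).toReal
        ∂(volume.restrict Dᶜ).withDensity (muDens d D k)) < ⊤ :=
      lt_of_le_of_lt (le_add_self) h2
    rw [lintegral_withDensity_eq_lintegral_mul _ hμmeas
      (by fun_prop)] at h3
    refine lt_of_le_of_lt (le_of_eq ?_) h3
    refine lintegral_congr fun x => ?_
    have : ENNReal.ofReal (u x ^ 2) = ‖u x‖ₑ ^ (2 : ℝ≥0∞).toReal := by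
      rw [Real.enorm_eq_ofReal_abs]
      rw [show ((2:ℝ≥0∞).toReal) = ((2:ℕ):ℝ) by norm_num, ENNReal.rpow_natCast,
        ← ENNReal.ofReal_pow (abs_nonneg _), sq_abs]
    rw [this, Pi.mul_apply, mul_comm]
  -- finiteness of hatE w
  have hEwfin : hatE d D k w < ⊤ := by
    have hptwise : ∀ p : Euc d × Euc d,
        ENNReal.ofReal ((w p.1 - w p.2) ^ 2 * k p.1 p.2) ≤
          ENNReal.ofReal (2 * (u p.1 - u p.2) ^ 2 * k p.1 p.2) +
          ENNReal.ofReal (2 * (v p.1 - v p.2) ^ 2 * k p.1 p.2) := by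
      intro p
      rcases le_or_gt (k p.1 p.2) 0 with hkle | hkpos
      · have : (w p.1 - w p.2) ^ 2 * k p.1 p.2 ≤ 0 :=
          mul_nonpos_of_nonneg_of_nonpos (sq_nonneg _) hkle
        rw [ENNReal.ofReal_eq_zero.2 this]
        exact zero_le
      · have huvw : ∀ x, u x = w x + v x := by
          intro x
          by_cases hx : x ∈ D
          · simp [hw, hv, Set.indicator_of_mem hx,
              Set.indicator_of_notMem ((fun hc => hc hx : _ ∉ Dᶜ))]
          · rw [hw, hv, Set.indicator_of_notMem hx,
              Set.indicator_of_mem (Set.mem_compl hx), zero_add]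
        have hsq : (w p.1 - w p.2) ^ 2 ≤ 2 * (u p.1 - u p.2) ^ 2 + 2 * (v p.1 - v p.2) ^ 2 := by
          rw [huvw p.1, huvw p.2]; nlinarith [sq_nonneg (w p.1 - w p.2 + 2 * (v p.1 - v p.2))]
        calc ENNReal.ofReal ((w p.1 - w p.2) ^ 2 * k p.1 p.2)
            ≤ ENNReal.ofReal ((2 * (u p.1 - u p.2) ^ 2 + 2 * (v p.1 - v p.2) ^ 2) * k p.1 p.2) :=
              ENNReal.ofReal_le_ofReal (mul_le_mul_of_nonneg_right hsq hkpos.le)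
          _ = _ := by
              rw [add_mul, ENNReal.ofReal_add (by positivity) (by positivity)]
    have hmeasu : Measurable fun p : Euc d × Euc d =>
        ENNReal.ofReal (2 * (u p.1 - u p.2) ^ 2 * k p.1 p.2) := by fun_prop
    have hmeasv : Measurable fun p : Euc d × Euc d =>
        ENNReal.ofReal (2 * (v p.1 - v p.2) ^ 2 * k p.1 p.2) := by fun_prop
    have hbound : hatE d D k w ≤ 2 * hatE d D k u + 2 * hatE d D k v := by
      rw [hatE, hatE, hatE]
      have step := lintegral_mono hptwise (μ := volume.restrict ((univ : Set (Euc d × Euc d)) \ (Dᶜ ×ˢ Dᶜ)))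
      rw [lintegral_add_left hmeasu] at step
      have e2 : ∀ f : Euc d × Euc d → ℝ, (∫⁻ p in ((univ : Set (Euc d × Euc d)) \ (Dᶜ ×ˢ Dᶜ)),
          ENNReal.ofReal (2 * f p)) = 2 * ∫⁻ p in ((univ : Set (Euc d × Euc d)) \ (Dᶜ ×ˢ Dᶜ)),
          ENNReal.ofReal (f p) := by
        intro f
        simp_rw [ENNReal.ofReal_mul (by norm_num : (0:ℝ) ≤ 2)]
        rw [lintegral_const_mul' _ _ (by norm_num), ENNReal.ofReal_ofNat]
      simp_rw [mul_assoc (2:ℝ)] at step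
      rw [e2 (fun p => (u p.1 - u p.2) ^ 2 * k p.1 p.2),
        e2 (fun p => (v p.1 - v p.2) ^ 2 * k p.1 p.2)] at step
      calc (1 / 2 : ℝ≥0∞) * ∫⁻ p in ((univ : Set (Euc d × Euc d)) \ (Dᶜ ×ˢ Dᶜ)),
            ENNReal.ofReal ((w p.1 - w p.2) ^ 2 * k p.1 p.2)
          ≤ (1 / 2 : ℝ≥0∞) * (2 * (∫⁻ p in ((univ : Set (Euc d × Euc d)) \ (Dᶜ ×ˢ Dᶜ)),
            ENNReal.ofReal ((u p.1 - u p.2) ^ 2 * k p.1 p.2)) +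
            2 * ∫⁻ p in ((univ : Set (Euc d × Euc d)) \ (Dᶜ ×ˢ Dᶜ)),
            ENNReal.ofReal ((v p.1 - v p.2) ^ 2 * k p.1 p.2)) :=
            mul_le_mul_right step _
        _ = _ := by ring
    refine lt_of_le_of_lt hbound ?_
    have h1 : hatE d D k u < ⊤ := hu.2
    have h2 : hatE d D k v < ⊤ := hEv ▸ hTfin
    exact ENNReal.add_lt_top.2 ⟨ENNReal.mul_lt_top (by norm_num) h1,
      ENNReal.mul_lt_top (by norm_num) h2⟩
  exact ⟨⟨hu.1.indicator hAc, hEv ▸ hTfin⟩, ⟨hu.1.indicator hA, hEwfin⟩, hEv⟩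
end
end
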